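/- arXiv:1903.03070 — 4 statements merged into one kernel-verified Lean document; each statement's English description precedes it below -/
import Mathlib

section
/- Let X be a set, ▷ a relation between finite subsets of X and elements of X, and Q a predicate on X. If Q holds for every element of the closure of the empty set, then there exists a subset M of X which is maximal with respect to ▷ and Q, i.e., M is closed, Q holds on M, and for every x not in M, Q fails on M ⊕ x. -/
/-- `S ▷* y` : there is a finite subset `A ⊆ S` with `A ▷ y`. -/
def GenFrom {X : Type*} (rel : Finset X → X → Prop) (S : Set X) (y : X) : Prop :=
  ∃ A : Finset X, ↑A ⊆ S ∧ rel A y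

/-- The iterates of the closure operation: `S₀ = S`,
`S_{i+1}` adds everything generated (`▷*`) from what has been collected up to stage `i`. -/
def ClosureSeq {X : Type*} (rel : Finset X → X → Prop) (S : Set X) : ℕ → Set X
  | 0 => S
  | i + 1 => ClosureSeq rel S i ∪ {y | GenFrom rel (ClosureSeq rel S i) y}

/-- The closure `⟨S⟩` of `S` with respect to `▷`. -/
def Closure {X : Type*} (rel : Finset X → X → Prop) (S : Set X) : Set X :=
  ⋃ i, ClosureSeq rel S i

/-- `S ⊕ x := ⟨S ∪ {x}⟩`. -/
def Oplus {X : Type*} (rel : Finset X → X → Prop) (S : Set X) (x : X) : Set X :=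
  Closure rel (S ∪ {x})

/-- `S` is closed w.r.t. `▷*`. -/
def IsRelClosed {X : Type*} (rel : Finset X → X → Prop) (S : Set X) : Prop :=
  ∀ y, GenFrom rel S y → y ∈ S

lemma closureSeq_mono' {X : Type*} (rel : Finset X → X → Prop) (S : Set X) :
    Monotone (ClosureSeq rel S) := by
  apply monotone_nat_of_le_succ
  intro n
  exact Set.subset_union_left

lemma subset_closure' {X : Type*} (rel : Finset X → X → Prop) (S : Set X) :
    S ⊆ Closure rel S :=
  Set.subset_iUnion (ClosureSeq rel S) 0

lemma finset_subset_seq {X : Type*} (rel : Finset X → X → Prop) (S : Set X) (A : Finset X) :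
    ↑A ⊆ Closure rel S → ∃ n, ↑A ⊆ ClosureSeq rel S n := by
  classical
  induction A using Finset.induction_on with
  | empty => exact fun _ => ⟨0, by simp⟩
  | @insert a A' ha ih =>
    intro hA
    obtain ⟨n, hn⟩ := ih (fun z hz => hA (by simp [hz]))
    have haC : a ∈ Closure rel S := hA (by simp)
    obtain ⟨m, hm⟩ := Set.mem_iUnion.mp haC
    refine ⟨max n m, ?_⟩
    intro z hz
    simp only [Finset.coe_insert, Set.mem_insert_iff] at hz
    rcases hz with rfl | hz
    · exact closureSeq_mono' rel S (le_max_right n m) hm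
    · exact closureSeq_mono' rel S (le_max_left n m) (hn hz)

lemma closure_isClosed {X : Type*} (rel : Finset X → X → Prop) (S : Set X) :
    IsRelClosed rel (Closure rel S) := by
  rintro y ⟨A, hA, hrel⟩
  obtain ⟨n, hn⟩ := finset_subset_seq rel S A hA
  exact Set.mem_iUnion.mpr ⟨n + 1, Or.inr ⟨A, hn, hrel⟩⟩

lemma chain_finset_subset {X : Type*} {c : Set (Set X)} (hc : IsChain (· ⊆ ·) c)
    (hne : c.Nonempty) (A : Finset X) : ↑A ⊆ ⋃₀ c → ∃ t ∈ c, ↑A ⊆ t := by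
  classical
  induction A using Finset.induction_on with
  | empty => exact fun _ => hne.imp (fun t ht => ⟨ht, by simp⟩)
  | @insert a A' ha ih =>
    intro hA
    obtain ⟨t, htc, ht⟩ := ih (fun z hz => hA (by simp [hz]))
    obtain ⟨s, hsc, has⟩ := hA (show a ∈ (↑(insert a A') : Set X) by simp)
    rcases hc.total htc hsc with h | h
    · refine ⟨s, hsc, ?_⟩
      simp only [Finset.coe_insert, Set.insert_subset_iff]
      exact ⟨has, ht.trans h⟩
    · refine ⟨t, htc, ?_⟩
      simp only [Finset.coe_insert, Set.insert_subset_iff]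
      exact ⟨h has, ht⟩

theorem stmt0 {X : Type*} (rel : Finset X → X → Prop) (Q : X → Prop)
    (hQ : ∀ y ∈ Closure rel (∅ : Set X), Q y) :
    ∃ M : Set X, IsRelClosed rel M ∧ (∀ y ∈ M, Q y) ∧
      ∀ x ∉ M, ¬ ∀ y ∈ Oplus rel M x, Q y := by
  set 𝒮 : Set (Set X) := {S | IsRelClosed rel S ∧ ∀ y ∈ S, Q y} with h𝒮
  have h0 : Closure rel (∅ : Set X) ∈ 𝒮 := ⟨closure_isClosed rel _, hQ⟩
  obtain ⟨M, -, hM⟩ := zorn_subset_nonempty 𝒮 (fun c hc hchain hne => by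
    refine ⟨⋃₀ c, ⟨?_, ?_⟩, fun s hs => Set.subset_sUnion_of_mem hs⟩
    · rintro y ⟨A, hA, hrel⟩
      obtain ⟨t, htc, hAt⟩ := chain_finset_subset hchain hne A hA
      exact Set.subset_sUnion_of_mem htc ((hc htc).1 y ⟨A, hAt, hrel⟩)
    · rintro y ⟨t, htc, hyt⟩
      exact (hc htc).2 y hyt) _ h0
  refine ⟨M, hM.prop.1, hM.prop.2, fun x hx hall => hx ?_⟩
  have hsub : M ⊆ Oplus rel M x :=
    (Set.subset_union_left).trans (subset_closure' rel (M ∪ {x}))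
  have hmem : Oplus rel M x ∈ 𝒮 := ⟨closure_isClosed rel _, hall⟩
  have heq := hM.eq_of_subset hmem hsub
  rw [heq]
  exact subset_closure' rel (M ∪ {x}) (Or.inr rfl)
end

section
/- Let X be countable with enumeration (xₙ)ₙ∈ℕ, ▷ a relation between finite subsets of X and elements of X, and Q a predicate on X. Suppose Q(⟨∅⟩) holds and M ⊆ X satisfies, for all n ∈ ℕ: xₙ ∈ M if and only if Q((M↾n) ⊕ xₙ). Then, setting Mₙ := ⟨M↾n⟩, the property Q(Mₙ) holds for every n ∈ ℕ. -/
/-- The initial segment `S↾n = S ∩ {x_m | m < n}` of `S` w.r.t. the enumeration `x`. -/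
def InitSeg {X : Type*} (x : ℕ → X) (S : Set X) (n : ℕ) : Set X :=
  S ∩ {y | ∃ m < n, x m = y}


theorem myClosureMono {X : Type*} (rel : Finset X → X → Prop) {S T : Set X}
    (h : S ⊆ T) : Closure rel S ⊆ Closure rel T := by
  have key : ∀ i, ClosureSeq rel S i ⊆ ClosureSeq rel T i := by
    intro i
    induction i with
    | zero => exact h
    | succ i ih =>
      intro y hy
      rcases hy with hy | ⟨A, hA, hrel⟩
      · exact Or.inl (ih hy)
      · exact Or.inr ⟨A, fun a ha => ih (hA ha), hrel⟩
  exact Set.iUnion_mono key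

/-- If `Q(⟨∅⟩)` and `M` satisfies `xₙ ∈ M ↔ Q((M↾n) ⊕ xₙ)` for all `n`, then setting
`Mₙ := ⟨M↾n⟩` we have `Q(Mₙ)` for every `n`. -/
theorem stmt6 {X : Type*} (x : ℕ → X) (hx : Function.Surjective x)
    (rel : Finset X → X → Prop) (Q : X → Prop) (M : Set X)
    (hQ : ∀ y ∈ Closure rel (∅ : Set X), Q y)
    (hM : ∀ n : ℕ, x n ∈ M ↔ ∀ y ∈ Oplus rel (InitSeg x M n) (x n), Q y) :
    ∀ n : ℕ, ∀ y ∈ Closure rel (InitSeg x M n), Q y := by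
  intro n
  induction n with
  | zero =>
    have : InitSeg x M 0 = (∅ : Set X) := by
      ext y; simp [InitSeg]
    rw [this]; exact hQ
  | succ n ih =>
    by_cases hmem : x n ∈ M
    · intro y hy
      have hsub : InitSeg x M (n + 1) ⊆ InitSeg x M n ∪ {x n} := by
        rintro y ⟨hyM, m, hm, rfl⟩
        rcases Nat.lt_succ_iff_lt_or_eq.mp hm with hm | rfl
        · exact Or.inl ⟨hyM, m, hm, rfl⟩
        · exact Or.inr rfl
      exact (hM n).mp hmem y (myClosureMono rel hsub hy)
    · intro y hy
      have hsub : InitSeg x M (n + 1) ⊆ InitSeg x M n := by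
        rintro y ⟨hyM, m, hm, rfl⟩
        rcases Nat.lt_succ_iff_lt_or_eq.mp hm with hm | rfl
        · exact ⟨hyM, m, hm, rfl⟩
        · exact absurd hyM hmem
      exact ih y (myClosureMono rel hsub hy)
end

section
/- Let X be a countable commutative ring with enumeration (xₙ)ₙ∈ℕ, where x₀ = 0, x₁ = 1, x₂ = r. Suppose M ⊆ X and for every n with xₙ ∉ M there exist a function b : (M↾n ∪ {xₙ}) → X and an integer e > 0 with Σ_{a ∈ M↾n ∪ {xₙ}} a·b(a) = r^e. Suppose furthermore that at least one of the following holds: (1) 1 ∈ M; (2) r ∈ M; (3) there exist u, v ∈ M with u + v ∉ M; (4) there exist u ∈ M and v ∈ X with u·v ∉ M; (5) there exist u, v ∉ M with u·v ∈ M. Then there exist a nonempty finite subset A ⊆ M, a function b : A → X, and an integer e > 0 such that Σ_{a ∈ A} a·b(a) = r^e. -/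
/-- The initial segment `S↾n := S ∩ {x_m | m < n}` as a finite set, for the
enumeration `x` of the ring. -/
def RingSeg {X : Type*} [DecidableEq X] (x : ℕ → X) (M : Set X)
    [DecidablePred (· ∈ M)] (n : ℕ) : Finset X :=
  ((Finset.range n).image x).filter (· ∈ M)

theorem aux_finish {X : Type*} [CommRing X] (M : Set X) (r : X) (e : ℕ)
    (hM : M.Nonempty) (he : 0 < e) (hr : r ^ e ∈ Ideal.span M) :
    ∃ (A : Finset X) (b : X → X) (e : ℕ), A.Nonempty ∧ ↑A ⊆ M ∧ 0 < e ∧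
      ∑ a ∈ A, a * b a = r ^ e := by
  obtain ⟨t, hts, ht⟩ := Submodule.mem_span_finite_of_mem_span hr
  rw [Submodule.mem_span_finset] at ht
  obtain ⟨f, -, hf⟩ := ht
  obtain ⟨m, hm⟩ := hM
  rcases t.eq_empty_or_nonempty with h | h
  · refine ⟨{m}, fun _ => 0, e, Finset.singleton_nonempty m, by simpa, he, ?_⟩
    rw [← hf, h]
    simp
  · refine ⟨t, f, e, h, hts, he, ?_⟩
    rw [← hf]
    exact Finset.sum_congr rfl fun a _ => by rw [smul_eq_mul, mul_comm]

/-- Lemma 9 of the paper: if whenever `xₙ ∉ M` the set `M↾n ∪ {xₙ}` generates a positive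
power of `r`, and `M` fails to be a prime ideal not containing `r` in one of the five
listed ways, then some nonempty finite subset `A ⊆ M` generates a positive power of `r`. -/
theorem stmt15 (X : Type*) [CommRing X] [Countable X] [DecidableEq X]
    (x : ℕ → X) (hx : Function.Surjective x) (r : X)
    (hx0 : x 0 = 0) (hx1 : x 1 = 1) (hx2 : x 2 = r)
    (M : Set X) [DecidablePred (· ∈ M)]
    (hf : ∀ n : ℕ, x n ∉ M → ∃ (b : X → X) (e : ℕ), 0 < e ∧
      ∑ a ∈ insert (x n) (RingSeg x M n), a * b a = r ^ e)
    (hcase : (1 : X) ∈ M ∨ r ∈ M ∨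
      (∃ u ∈ M, ∃ v ∈ M, u + v ∉ M) ∨
      (∃ u ∈ M, ∃ v : X, u * v ∉ M) ∨
      (∃ u v : X, u ∉ M ∧ v ∉ M ∧ u * v ∈ M)) :
    ∃ (A : Finset X) (b : X → X) (e : ℕ), A.Nonempty ∧ ↑A ⊆ M ∧ 0 < e ∧
      ∑ a ∈ A, a * b a = r ^ e := by
  -- key: if y ∉ M then some positive power of r is in the span of insert y M
  have key : ∀ y : X, y ∉ M → ∃ e : ℕ, 0 < e ∧ r ^ e ∈ Ideal.span (insert y M) := by
    intro y hy
    obtain ⟨n, rfl⟩ := hx y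
    obtain ⟨b, e, he, hsum⟩ := hf n hy
    refine ⟨e, he, ?_⟩
    rw [← hsum]
    refine Ideal.sum_mem _ fun a ha => Ideal.mul_mem_right _ _ (Ideal.subset_span ?_)
    rcases Finset.mem_insert.mp ha with rfl | ha
    · exact Set.mem_insert _ _
    · exact Set.mem_insert_of_mem _ ((Finset.mem_filter.mp ha).2)
  rcases hcase with h1 | h2 | ⟨u, hu, v, hv, huv⟩ | ⟨u, hu, v, huv⟩ | ⟨u, v, hu, hv, huv⟩
  · refine ⟨{1}, fun _ => r, 1, Finset.singleton_nonempty _, by simpa, one_pos, by simp⟩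
  · refine ⟨{r}, fun _ => 1, 1, Finset.singleton_nonempty _, by simpa, one_pos, by simp⟩
  · obtain ⟨e, he, hr⟩ := key _ huv
    refine aux_finish M r e ⟨u, hu⟩ he ?_
    exact Ideal.span_le.mpr (Set.insert_subset_iff.mpr
      ⟨add_mem (Ideal.subset_span hu) (Ideal.subset_span hv), Ideal.subset_span⟩) hr
  · obtain ⟨e, he, hr⟩ := key _ huv
    refine aux_finish M r e ⟨u, hu⟩ he ?_
    exact Ideal.span_le.mpr (Set.insert_subset_iff.mpr
      ⟨Ideal.mul_mem_right _ _ (Ideal.subset_span hu), Ideal.subset_span⟩) hr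
  · obtain ⟨e, he, hre⟩ := key _ hu
    obtain ⟨d, hd, hrd⟩ := key _ hv
    refine aux_finish M r (e + d) ⟨u * v, huv⟩ (Nat.add_pos_left he d) ?_
    have hmul : Ideal.span (insert u M) * Ideal.span (insert v M) ≤ Ideal.span M := by
      rw [Ideal.span_mul_span']
      refine Ideal.span_le.mpr ?_
      rintro z hz
      rw [Set.mem_mul] at hz
      obtain ⟨a, ha, b, hb, rfl⟩ := hz
      rcases ha with rfl | ha
      · rcases hb with rfl | hb
        · exact Ideal.subset_span huv
        · exact Ideal.mul_mem_left _ _ (Ideal.subset_span hb)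
      · exact Ideal.mul_mem_right _ _ (Ideal.subset_span ha)
    have := Ideal.mul_mem_mul hre hrd
    rw [← pow_add] at this
    exact hmul this
end

section
/- Let X be a countable commutative ring with enumeration (xₙ)ₙ∈ℕ, where x₀ = 0, x₁ = 1, x₂ = r. Suppose M ⊆ X and for every n with xₙ ∉ M there exist a function b : (M↾n ∪ {xₙ}) → X and an integer e > 0 with Σ_{a ∈ M↾n ∪ {xₙ}} a·b(a) = r^e. Suppose at least one of the following holds: (1) 1 ∈ M; (2) r ∈ M; (3) there exist u, v ∈ M with u + v ∉ M; (4) there exist u ∈ M and v ∈ X with u·v ∉ M; (5) there exist u, v ∉ M with u·v ∈ M. Then there exist n ∈ ℕ with xₙ ∈ M, a function b : (M↾n ∪ {xₙ}) → X, and an integer e > 0 such that Σ_{a ∈ M↾n ∪ {xₙ}} a·b(a) = r^e. -/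
lemma mem_ringSeg {X : Type*} [DecidableEq X] {x : ℕ → X} {M : Set X}
    [DecidablePred (· ∈ M)] {n : ℕ} {a : X} :
    a ∈ RingSeg x M n ↔ (∃ m < n, x m = a) ∧ a ∈ M := by
  simp [RingSeg]

lemma ringSeg_mem_M {X : Type*} [DecidableEq X] {x : ℕ → X} {M : Set X}
    [DecidablePred (· ∈ M)] {n : ℕ} {a : X} (h : a ∈ RingSeg x M n) : a ∈ M :=
  (mem_ringSeg.1 h).2

lemma sum_restrict {X : Type*} [CommRing X] [DecidableEq X] {S T : Finset X} (hST : S ⊆ T) (b : X → X) :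
    ∑ a ∈ T, a * (if a ∈ S then b a else 0) = ∑ a ∈ S, a * b a := by
  rw [← Finset.sum_subset hST (fun a _ ha => by simp [ha])]
  exact Finset.sum_congr rfl fun a ha => by simp [ha]

lemma sum_single {X : Type*} [CommRing X] [DecidableEq X] {T : Finset X} {u β : X} (hu : u ∈ T) :
    ∑ a ∈ T, a * (if a = u then β else 0) = u * β := by
  rw [Finset.sum_eq_single u]
  · simp
  · intro a _ ha; simp [ha]
  · intro h; exact absurd hu h

/-- Key reduction: any `r^e`-combination supported on a finite nonempty subset of `M`
gives the desired conclusion. -/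
lemma key {X : Type*} [CommRing X] [DecidableEq X] (x : ℕ → X)
    (hx : Function.Surjective x) (r : X) (M : Set X) [DecidablePred (· ∈ M)]
    (T : Finset X) (hT : ∀ a ∈ T, a ∈ M) (hne : T.Nonempty) (c : X → X) (e : ℕ)
    (he : 0 < e) (hsum : ∑ a ∈ T, a * c a = r ^ e) :
    ∃ (n : ℕ) (b : X → X) (e' : ℕ), x n ∈ M ∧ 0 < e' ∧
      ∑ a ∈ insert (x n) (RingSeg x M n), a * b a = r ^ e' := by
  choose i hi using hx
  set n : ℕ := (T.image i).max' (hne.image i) with hn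
  have hnmem : n ∈ T.image i := (T.image i).max'_mem (hne.image i)
  obtain ⟨t₀, ht₀, hit₀⟩ := Finset.mem_image.1 hnmem
  have hxn : x n = t₀ := by rw [← hit₀, hi]
  have hTsub : T ⊆ insert (x n) (RingSeg x M n) := by
    intro t ht
    have hle : i t ≤ n := (T.image i).le_max' _ (Finset.mem_image_of_mem i ht)
    rcases lt_or_eq_of_le hle with hlt | heq
    · exact Finset.mem_insert_of_mem (mem_ringSeg.2 ⟨⟨i t, hlt, hi t⟩, hT t ht⟩)
    · have : x n = t := by rw [← heq, hi]
      exact Finset.mem_insert.2 (Or.inl this.symm)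
  refine ⟨n, fun a => if a ∈ T then c a else 0, e, ?_, he, ?_⟩
  · rw [hxn]; exact hT t₀ ht₀
  · rw [sum_restrict hTsub c, hsum]

/-- Lemma 10 of the paper: under the same hypotheses as Lemma 9, there are `n` with
`xₙ ∈ M`, coefficients `b` and an exponent `e > 0` such that `M↾n ∪ {xₙ}` generates
`r^e` via `b`. -/
theorem stmt16 (X : Type*) [CommRing X] [Countable X] [DecidableEq X]
    (x : ℕ → X) (hx : Function.Surjective x) (r : X)
    (hx0 : x 0 = 0) (hx1 : x 1 = 1) (hx2 : x 2 = r)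
    (M : Set X) [DecidablePred (· ∈ M)]
    (hf : ∀ n : ℕ, x n ∉ M → ∃ (b : X → X) (e : ℕ), 0 < e ∧
      ∑ a ∈ insert (x n) (RingSeg x M n), a * b a = r ^ e)
    (hcase : (1 : X) ∈ M ∨ r ∈ M ∨
      (∃ u ∈ M, ∃ v ∈ M, u + v ∉ M) ∨
      (∃ u ∈ M, ∃ v : X, u * v ∉ M) ∨
      (∃ u v : X, u ∉ M ∧ v ∉ M ∧ u * v ∈ M)) :
    ∃ (n : ℕ) (b : X → X) (e : ℕ), x n ∈ M ∧ 0 < e ∧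
      ∑ a ∈ insert (x n) (RingSeg x M n), a * b a = r ^ e := by
  rcases hcase with h1 | hr | ⟨u, hu, v, hv, huv⟩ | ⟨u, hu, v, huv⟩ | ⟨u, v, hu, hv, huv⟩
  · -- 1 ∈ M
    refine key x hx r M {1} (by simpa using h1) ⟨1, by simp⟩ (fun _ => r) 1
      one_pos (by simp)
  · -- r ∈ M
    refine key x hx r M {r} (by simpa using hr) ⟨r, by simp⟩ (fun _ => 1) 1
      one_pos (by simp)
  · -- u, v ∈ M, u + v ∉ M
    obtain ⟨m, hm⟩ := hx (u + v)
    obtain ⟨b, e, he, hsum⟩ := hf m (hm ▸ huv)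
    rw [hm] at hsum
    set S₀ := RingSeg x M m with hS₀
    have hnm : u + v ∉ S₀ := fun h => huv (ringSeg_mem_M h)
    rw [Finset.sum_insert hnm] at hsum
    set β := b (u + v) with hβ
    set T : Finset X := insert u (insert v S₀) with hT
    have hTM : ∀ a ∈ T, a ∈ M := by
      intro a ha
      rcases Finset.mem_insert.1 ha with rfl | ha
      · exact hu
      rcases Finset.mem_insert.1 ha with rfl | ha
      · exact hv
      · exact ringSeg_mem_M ha
    have hS₀T : S₀ ⊆ T := (Finset.subset_insert _ _).trans (Finset.subset_insert _ _)
    have huT : u ∈ T := Finset.mem_insert_self _ _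
    have hvT : v ∈ T := Finset.mem_insert_of_mem (Finset.mem_insert_self _ _)
    refine key x hx r M T hTM ⟨u, huT⟩
      (fun a => (if a ∈ S₀ then b a else 0) +
        ((if a = u then β else 0) + (if a = v then β else 0))) e he ?_
    have expand : ∑ a ∈ T, a * ((if a ∈ S₀ then b a else 0) +
        ((if a = u then β else 0) + (if a = v then β else 0)))
        = (∑ a ∈ T, a * (if a ∈ S₀ then b a else 0)) +
          ((∑ a ∈ T, a * (if a = u then β else 0)) +
           (∑ a ∈ T, a * (if a = v then β else 0))) := by
      rw [← Finset.sum_add_distrib, ← Finset.sum_add_distrib]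
      exact Finset.sum_congr rfl fun a _ => by ring
    rw [expand, sum_restrict hS₀T, sum_single huT, sum_single hvT]
    linear_combination hsum
  · -- u ∈ M, u * v ∉ M
    obtain ⟨m, hm⟩ := hx (u * v)
    obtain ⟨b, e, he, hsum⟩ := hf m (hm ▸ huv)
    rw [hm] at hsum
    set S₀ := RingSeg x M m with hS₀
    have hnm : u * v ∉ S₀ := fun h => huv (ringSeg_mem_M h)
    rw [Finset.sum_insert hnm] at hsum
    set β := b (u * v) with hβ
    set T : Finset X := insert u S₀ with hT
    have hTM : ∀ a ∈ T, a ∈ M := by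
      intro a ha
      rcases Finset.mem_insert.1 ha with rfl | ha
      · exact hu
      · exact ringSeg_mem_M ha
    have hS₀T : S₀ ⊆ T := Finset.subset_insert _ _
    have huT : u ∈ T := Finset.mem_insert_self _ _
    refine key x hx r M T hTM ⟨u, huT⟩
      (fun a => (if a ∈ S₀ then b a else 0) + (if a = u then v * β else 0)) e he ?_
    have expand : ∑ a ∈ T, a * ((if a ∈ S₀ then b a else 0) + (if a = u then v * β else 0))
        = (∑ a ∈ T, a * (if a ∈ S₀ then b a else 0)) +
          (∑ a ∈ T, a * (if a = u then v * β else 0)) := by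
      rw [← Finset.sum_add_distrib]
      exact Finset.sum_congr rfl fun a _ => by ring
    rw [expand, sum_restrict hS₀T, sum_single huT]
    linear_combination hsum
  · -- u ∉ M, v ∉ M, u * v ∈ M
    obtain ⟨m₁, hm₁⟩ := hx u
    obtain ⟨m₂, hm₂⟩ := hx v
    obtain ⟨b₁, e₁, he₁, hsum₁⟩ := hf m₁ (hm₁ ▸ hu)
    obtain ⟨b₂, e₂, he₂, hsum₂⟩ := hf m₂ (hm₂ ▸ hv)
    rw [hm₁] at hsum₁
    rw [hm₂] at hsum₂
    set S₁ := RingSeg x M m₁ with hS₁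
    set S₂ := RingSeg x M m₂ with hS₂
    have hnm₁ : u ∉ S₁ := fun h => hu (ringSeg_mem_M h)
    have hnm₂ : v ∉ S₂ := fun h => hv (ringSeg_mem_M h)
    rw [Finset.sum_insert hnm₁] at hsum₁
    rw [Finset.sum_insert hnm₂] at hsum₂
    set β₁ := b₁ u with hβ₁
    set β₂ := b₂ v with hβ₂
    set s₁ := ∑ a ∈ S₁, a * b₁ a with hs₁
    set s₂ := ∑ a ∈ S₂, a * b₂ a with hs₂
    set T : Finset X := insert (u * v) (S₁ ∪ S₂) with hT
    have hTM : ∀ a ∈ T, a ∈ M := by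
      intro a ha
      rcases Finset.mem_insert.1 ha with rfl | ha
      · exact huv
      rcases Finset.mem_union.1 ha with ha | ha
      · exact ringSeg_mem_M ha
      · exact ringSeg_mem_M ha
    have huvT : u * v ∈ T := Finset.mem_insert_self _ _
    have hS₁T : S₁ ⊆ T := Finset.Subset.trans Finset.subset_union_left
      (Finset.subset_insert _ _)
    have hS₂T : S₂ ⊆ T := Finset.Subset.trans Finset.subset_union_right
      (Finset.subset_insert _ _)
    refine key x hx r M T hTM ⟨u * v, huvT⟩
      (fun a => (if a = u * v then β₁ * β₂ else 0) +
        ((if a ∈ S₂ then (u * β₁ + s₁) * b₂ a else 0) +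
         (if a ∈ S₁ then v * β₂ * b₁ a else 0))) (e₁ + e₂) (by omega) ?_
    have expand : ∑ a ∈ T, a * ((if a = u * v then β₁ * β₂ else 0) +
        ((if a ∈ S₂ then (u * β₁ + s₁) * b₂ a else 0) +
         (if a ∈ S₁ then v * β₂ * b₁ a else 0)))
        = (∑ a ∈ T, a * (if a = u * v then β₁ * β₂ else 0)) +
          ((∑ a ∈ T, a * (if a ∈ S₂ then (u * β₁ + s₁) * b₂ a else 0)) +
           (∑ a ∈ T, a * (if a ∈ S₁ then v * β₂ * b₁ a else 0))) := by
      rw [← Finset.sum_add_distrib, ← Finset.sum_add_distrib]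
      exact Finset.sum_congr rfl fun a _ => by ring
    rw [expand, sum_restrict hS₂T, sum_restrict hS₁T, sum_single huvT]
    have h2 : ∑ a ∈ S₂, a * ((u * β₁ + s₁) * b₂ a) = (u * β₁ + s₁) * s₂ := by
      rw [hs₂, Finset.mul_sum]
      exact Finset.sum_congr rfl fun a _ => by ring
    have h1 : ∑ a ∈ S₁, a * (v * β₂ * b₁ a) = v * β₂ * s₁ := by
      rw [hs₁, Finset.mul_sum]
      exact Finset.sum_congr rfl fun a _ => by ring
    rw [h1, h2, pow_add]
    linear_combination (v * β₂ + s₂) * hsum₁ + r ^ e₁ * hsum₂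
end
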